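/- Fix n ≥ 1. Every function f : 2^{[n]} → ℤ with f(∅) = 0 can be written uniquely as a ℤ-linear combination of the rank functions r_{SM_n(I)}, as I ranges over the nonempty subsets of [n]; that is, these rank functions form a ℤ-basis of the abelian group of functions f : 2^{[n]} → ℤ with f(∅) = 0. -/

import Mathlib

open MvPolynomial

noncomputable section

/-- The defining recursion for the family of Grothendieck polynomials of permutations of `Fin n`
(written with 0-based positions): `G w₀ = x₀^{n-1} x₁^{n-2} ⋯`, and whenever `w j < w (j+1)`,
`(x_j - x_{j+1}) * G w = f - s_j · f` where `f = (1 - x_{j+1}) * G (w s_j)`. -/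
def IsGrothendieck (n : ℕ) (G : Equiv.Perm (Fin n) → MvPolynomial (Fin n) ℤ) : Prop :=
  G Fin.revPerm = ∏ i : Fin n, X i ^ (n - 1 - (i : ℕ)) ∧
    ∀ (w : Equiv.Perm (Fin n)) (j j' : Fin n), (j : ℕ) + 1 = (j' : ℕ) → w j < w j' →
      (X j - X j') * G w =
        (1 - X j') * G (w * Equiv.swap j j') -
          rename (⇑(Equiv.swap j j')) ((1 - X j') * G (w * Equiv.swap j j'))

/-- `w` is vexillary: it avoids the pattern 2143. -/
def Vexillary {n : ℕ} (w : Equiv.Perm (Fin n)) : Prop :=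
  ¬∃ i j k l : Fin n, i < j ∧ j < k ∧ k < l ∧ w j < w i ∧ w i < w l ∧ w l < w k

/-- The Rothe diagram of `w`, as a set of (row, column) pairs with 1-based indexing:
`D(w) = {(i,j) : i < w⁻¹(j), j < w(i)}`. -/
def RotheDiagram (n : ℕ) (w : Equiv.Perm (Fin n)) : Finset (ℕ × ℕ) :=
  Finset.image (fun p : Fin n × Fin n => ((p.1 : ℕ) + 1, (p.2 : ℕ) + 1))
    (Finset.univ.filter fun p : Fin n × Fin n => p.1 < w.symm p.2 ∧ p.2 < w p.1)

/-- The rank function of the Rothe diagram: `r(i,j) = #{k < i : w(k) < j}` (1-based). -/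
def RotheRank (n : ℕ) (w : Equiv.Perm (Fin n)) (s : ℕ × ℕ) : ℤ :=
  ((Finset.univ.filter fun k : Fin n => (k : ℕ) + 1 < s.1 ∧ (w k : ℕ) + 1 < s.2).card : ℤ)

/-- Two squares are linked with respect to the Rothe rank function:
`i - i' = r(i,j) - r(i',j')`. -/
def RLinked (n : ℕ) (w : Equiv.Perm (Fin n)) (s t : ℕ × ℕ) : Prop :=
  (s.1 : ℤ) - (t.1 : ℤ) = RotheRank n w s - RotheRank n w t

/-- A bubbling diagram: a diagram `D` of squares (row ≥ 1, 1-based), a nonnegative rank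
function `r` and a set `F ⊆ D` of dead squares, such that every dead square has a live square
strictly above it in its column with the prescribed rank difference to the closest such, and
dead squares in the same row have distinct ranks. -/
structure BubblingDiagram where
  D : Finset (ℕ × ℕ)
  r : ℕ × ℕ → ℤ
  F : Finset (ℕ × ℕ)
  F_subset : F ⊆ D
  r_nonneg : ∀ s ∈ D, 0 ≤ r s
  dead_live_above : ∀ s ∈ F, ∃ i' < s.1, (i', s.2) ∈ D ∧ (i', s.2) ∉ F
  dead_rank : ∀ s ∈ F, ∀ i' < s.1, (i', s.2) ∈ D → (i', s.2) ∉ F →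
    (∀ i'', i' < i'' → i'' < s.1 → (i'', s.2) ∈ D → (i'', s.2) ∈ F) →
    r s - r (i', s.2) = (s.1 : ℤ) - (i' : ℤ)
  dead_distinct : ∀ s ∈ F, ∀ t ∈ F, s.1 = t.1 → s.2 ≠ t.2 → r s ≠ r t

/-- A bubbling move: a live square `(i,j)` with `(i-1,j)` empty moves up one row,
its rank decreasing by one. -/
def IsBubbleMove (B C : BubblingDiagram) : Prop :=
  ∃ i j : ℕ, 2 ≤ i ∧ (i, j) ∈ B.D ∧ (i, j) ∉ B.F ∧ (i - 1, j) ∉ B.D ∧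
    C.D = insert (i - 1, j) (B.D.erase (i, j)) ∧ C.F = B.F ∧
    C.r = Function.update B.r (i - 1, j) (B.r (i, j) - 1)

/-- A K-bubbling move: a live square `(i,j)` with `(i-1,j)` empty, and such that no dead square
in row `i` has the same rank as `(i,j)`, moves up one row (rank decreasing by one), leaving
behind a dead copy of itself. -/
def IsKBubbleMove (B C : BubblingDiagram) : Prop :=
  ∃ i j : ℕ, 2 ≤ i ∧ (i, j) ∈ B.D ∧ (i, j) ∉ B.F ∧ (i - 1, j) ∉ B.D ∧
    (∀ k : ℕ, (i, k) ∈ B.F → B.r (i, k) ≠ B.r (i, j)) ∧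
    C.D = insert (i - 1, j) B.D ∧ C.F = insert (i, j) B.F ∧
    C.r = Function.update B.r (i - 1, j) (B.r (i, j) - 1)

/-- `C ∈ BD(B)`: `C` is obtainable from `B` by finitely many bubbling and K-bubbling moves. -/
def InBD (B C : BubblingDiagram) : Prop :=
  Relation.ReflTransGen (fun P Q => IsBubbleMove P Q ∨ IsKBubbleMove P Q) B C

/-- The Rothe bubbling diagram `𝒟(w) = (D(w), r_{D(w)}, ∅)`. -/
def RotheBD (n : ℕ) (w : Equiv.Perm (Fin n)) : BubblingDiagram where
  D := RotheDiagram n w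
  r := RotheRank n w
  F := ∅
  F_subset := Finset.empty_subset _
  r_nonneg := fun _ _ => Int.natCast_nonneg _
  dead_live_above := by simp
  dead_rank := by simp
  dead_distinct := by simp

/-- The weight of a diagram: its `i`-th coordinate is the number of squares in row `i+1`
(1-based row `i+1` corresponds to `i : Fin n`). -/
def diagWt (n : ℕ) (D : Finset (ℕ × ℕ)) (i : Fin n) : ℕ :=
  (D.filter fun s => s.1 = (i : ℕ) + 1).card

/-- Gale order on finite sets of naturals: same cardinality, and the `m`-th smallest element
of `R` is at most the `m`-th smallest element of `S`, for every `m`. -/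
def galeLE (R S : Finset ℕ) : Prop :=
  R.card = S.card ∧ ∀ m < R.card, (R.sort (· ≤ ·)).getD m 0 ≤ (S.sort (· ≤ ·)).getD m 0

/-- Column `j` of a diagram: the set of rows of its squares in column `j`. -/
def diagCol (D : Finset (ℕ × ℕ)) (j : ℕ) : Finset ℕ :=
  (D.filter fun s => s.2 = j).image Prod.fst

/-- Columnwise Gale order on diagrams. -/
def diagLE (C D : Finset (ℕ × ℕ)) : Prop := ∀ j : ℕ, galeLE (diagCol C j) (diagCol D j)

/-- The diagram lies in the grid `[n] × [n]` (1-based). -/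
def InGrid (n : ℕ) (D : Finset (ℕ × ℕ)) : Prop :=
  ∀ s ∈ D, s.1 ∈ Finset.Icc 1 n ∧ s.2 ∈ Finset.Icc 1 n

/-- M-convexity of a set of lattice points. -/
def MConvex {m : ℕ} (S : Set (Fin m → ℤ)) : Prop :=
  ∀ x ∈ S, ∀ y ∈ S, ∀ i : Fin m, y i < x i →
    ∃ j : Fin m, x j < y j ∧ (x - Pi.single i 1 + Pi.single j 1) ∈ S ∧
      (y - Pi.single j 1 + Pi.single i 1) ∈ S

open Classical in
/-- The rank function of the Schubert matroid `SM_n(I)`: the bases are the `B ⊆ [n]` with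
`B ≤ I` in Gale order, and `rank J = max {#(J ∩ B) : B a basis}`. -/
def schubertRank (n : ℕ) (I J : Finset ℕ) : ℕ :=
  ((Finset.Icc 1 n).powerset.filter fun B => galeLE B I).sup fun B => (J ∩ B).card

/-- The Schubert matroid polytope `P(SM_n(I)) ⊆ ℝⁿ`: the convex hull of the 0/1 indicator
vectors of the bases of `SM_n(I)` (coordinate `i : Fin n` stands for the element `i+1`). -/
def schubertPolytope (n : ℕ) (I : Finset ℕ) : Set (Fin n → ℝ) :=
  convexHull ℝ {v | ∃ B : Finset ℕ, B ⊆ Finset.Icc 1 n ∧ galeLE B I ∧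
    v = fun i : Fin n => if (i : ℕ) + 1 ∈ B then (1 : ℝ) else 0}

/-- A Schubitope: a finite Minkowski sum of Schubert matroid polytopes of nonempty
subsets of `[n]`. -/
def IsSchubitope (n : ℕ) (P : Set (Fin n → ℝ)) : Prop :=
  ∃ (k : ℕ) (I : Fin k → Finset ℕ), (∀ j, (I j).Nonempty ∧ I j ⊆ Finset.Icc 1 n) ∧
    P = {x | ∃ p : Fin k → Fin n → ℝ, (∀ j, p j ∈ schubertPolytope n (I j)) ∧ x = ∑ j, p j}

/-- A generalized permutahedron: the polytope cut out by a submodular function `z`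
with `z(∅) = 0`. -/
def IsGenPermutahedron {m : ℕ} (P : Set (Fin m → ℝ)) : Prop :=
  ∃ z : Finset (Fin m) → ℝ, z ∅ = 0 ∧
    (∀ A B : Finset (Fin m), z (A ∪ B) + z (A ∩ B) ≤ z A + z B) ∧
    P = {t | (∀ A : Finset (Fin m), ∑ i ∈ A, t i ≤ z A) ∧ ∑ i, t i = z Finset.univ}

/-- The padding sets `S^{(k,s)}`: `S^{(0,s)} = S` and `S^{(k,s)}` is obtained from
`S^{(k-1,s)}` by inserting the largest `i ∈ [1, s)` not already present (when one exists). -/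
def pad (S : Finset ℕ) (s : ℕ) : ℕ → Finset ℕ
  | 0 => S
  | k + 1 =>
      if h : ((Finset.Ico 1 s).filter fun i => i ∉ pad S s k).Nonempty then
        insert (((Finset.Ico 1 s).filter fun i => i ∉ pad S s k).max' h) (pad S s k)
      else pad S s k

/-- `d = s - #{i ∈ S : i ≤ s}`. -/
def padDepth (S : Finset ℕ) (s : ℕ) : ℕ := s - (S.filter fun i => i ≤ s).card

/-- The order `I ≺ J`: `max (I \ J) ≤ max (J \ I)` (with the convention `max ∅ = 0`). -/
def maxPrec (I J : Finset ℕ) : Prop := (I \ J).sup id ≤ (J \ I).sup id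

/-- Rows of the live squares of column `j` of a bubbling diagram. -/
def liveCol (B : BubblingDiagram) (j : ℕ) : Finset ℕ :=
  ((B.D \ B.F).filter fun s => s.2 = j).image Prod.fst

/-- The row of the `a`-th highest live square of column `j` (`a` is 1-based; highest means
smallest row index). -/
def nthLiveRow (B : BubblingDiagram) (j a : ℕ) : ℕ :=
  ((liveCol B j).sort (· ≤ ·)).getD (a - 1) 0

/-- The number of squares of `D` strictly below `s` in its column. -/
def belowCount (D : Finset (ℕ × ℕ)) (s : ℕ × ℕ) : ℕ :=
  (D.filter fun t => t.2 = s.2 ∧ s.1 < t.1).card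

/-- The total order `≺` on the squares of a diagram: lower rows first; within a row, fewer
squares below first; ties broken by smaller column index. -/
def sqPrec (D : Finset (ℕ × ℕ)) (s t : ℕ × ℕ) : Prop :=
  t.1 < s.1 ∨ (s.1 = t.1 ∧ belowCount D s < belowCount D t) ∨
    (s.1 = t.1 ∧ belowCount D s = belowCount D t ∧ s.2 < t.2)

end


section SchubertAux

open Finset List

def cntGT (X : Finset ℕ) (x : ℕ) : ℕ := (X.filter fun s => x < s).card
def cntLE (K : Finset ℕ) (x : ℕ) : ℕ := (K.filter fun s => s ≤ x).card

open Finset List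

lemma cntGT_eq_countP (X : Finset ℕ) (x : ℕ) :
    cntGT X x = (X.sort (· ≤ ·)).countP (fun s => decide (x < s)) := by
  classical
  have h1 : cntGT X x = Multiset.countP (fun s => x < s) X.val := by
    simp [cntGT, Multiset.countP_eq_card_filter, Finset.filter, Finset.card]
  rw [h1, ← Finset.sort_eq X (· ≤ ·), Multiset.coe_countP]

lemma countP_mono_forall2 {l m : List ℕ} (h : List.Forall₂ (· ≤ ·) l m) (x : ℕ) :
    l.countP (fun s => decide (x < s)) ≤ m.countP (fun s => decide (x < s)) := by
  induction h with
  | nil => simp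
  | cons hab h ih =>
    simp only [List.countP_cons]
    rcases Nat.lt_or_ge x _ with hx | hx
    · have : x < _ := lt_of_lt_of_le hx hab
      simp [hx, this]; omega
    · simp only [decide_eq_true_eq]
      split <;> omega

lemma gale_forall2 {B X : Finset ℕ} (h : galeLE B X) :
    List.Forall₂ (· ≤ ·) (B.sort (· ≤ ·)) (X.sort (· ≤ ·)) := by
  obtain ⟨hc, hg⟩ := h
  rw [List.forall₂_iff_get]
  constructor
  · simp [hc]
  · intro i h1 h2
    have := hg i (by simpa using h1)
    rwa [List.getD_eq_getElem _ _ h1, List.getD_eq_getElem _ _ h2] at this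

lemma galeLE.cntGT_le {B X : Finset ℕ} (h : galeLE B X) (x : ℕ) : cntGT B x ≤ cntGT X x := by
  rw [cntGT_eq_countP, cntGT_eq_countP]
  exact countP_mono_forall2 (gale_forall2 h) x


lemma countP_drop_ge {l : List ℕ} (hl : l.Pairwise (· < ·)) {i : ℕ} (hi : i < l.length)
    {x : ℕ} (hx : x < l[i]) : l.length - i ≤ l.countP (fun s => decide (x < s)) := by
  have hsub : (l.drop i).Sublist l := List.drop_sublist i l
  have hall : ∀ y ∈ l.drop i, (fun s => decide (x < s)) y = true := by
    intro y hy
    rw [List.mem_iff_getElem] at hy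
    obtain ⟨j, hj, rfl⟩ := hy
    rw [List.getElem_drop]
    simp only [decide_eq_true_eq]
    rcases Nat.eq_zero_or_pos j with rfl | hj0
    · simpa using hx
    · have hjl : i + j < l.length := by
        have := List.length_drop (i := i) (l := l)
        omega
      have : l[i] < l[i + j] := by
        apply List.pairwise_iff_getElem.mp hl i (i+j) hi hjl
        omega
      omega
  calc l.length - i = (l.drop i).length := by simp
    _ = ((l.drop i).countP (fun s => decide (x < s))) := by
        rw [List.countP_eq_length_filter, List.filter_eq_self.mpr hall]
    _ ≤ l.countP (fun s => decide (x < s)) := by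
        rw [List.countP_eq_length_filter, List.countP_eq_length_filter]
        exact (List.Sublist.filter _ hsub).length_le

lemma countP_le_of_sorted {m : List ℕ} (hm : m.Pairwise (· < ·)) {i : ℕ} (hi : i < m.length) :
    m.countP (fun s => decide (m[i] < s)) ≤ m.length - (i + 1) := by
  have key : i + 1 ≤ m.countP (fun s => decide (m[i] ≥ s)) := by
    have hsub : (m.take (i+1)).Sublist m := List.take_sublist (i+1) m
    have hall : ∀ y ∈ m.take (i+1), (fun s => decide (m[i] ≥ s)) y = true := by
      intro y hy
      rw [List.mem_iff_getElem] at hy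
      obtain ⟨j, hj, rfl⟩ := hy
      rw [List.getElem_take]
      have hlt : j < i + 1 := by
        have := List.length_take (i := i+1) (l := m)
        omega
      have hj' : j < m.length := by
        have := List.length_take (i := i+1) (l := m)
        omega
      simp only [ge_iff_le, decide_eq_true_eq]
      rcases Nat.lt_or_ge j i with hji | hji
      · exact le_of_lt (List.pairwise_iff_getElem.mp hm j i hj' hi hji)
      · have : j = i := by omega
        simp [this]
    calc i + 1 = (m.take (i+1)).length := by
          rw [List.length_take]; omega
      _ = (m.take (i+1)).countP (fun s => decide (m[i] ≥ s)) := by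
          rw [List.countP_eq_length_filter, List.filter_eq_self.mpr hall]
      _ ≤ m.countP (fun s => decide (m[i] ≥ s)) := by
          rw [List.countP_eq_length_filter, List.countP_eq_length_filter]
          exact (List.Sublist.filter _ hsub).length_le
  have hsplit : m.countP (fun s => decide (m[i] < s)) + m.countP (fun s => decide (m[i] ≥ s)) = m.length := by
    have hcong : (fun s => decide (m[i] ≥ s)) = (fun a => decide (¬(decide (m[i] < a) = true))) := by
      funext a
      simp [decide_eq_decide, not_lt]
    rw [hcong, ← List.length_eq_countP_add_countP (fun s => decide (m[i] < s)) (l := m)]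
  omega

lemma gale_of_cnt {B X : Finset ℕ} (hc : B.card = X.card)
    (h : ∀ x, cntGT B x ≤ cntGT X x) : galeLE B X := by
  refine ⟨hc, fun i hi => ?_⟩
  have hll : (B.sort (· ≤ ·)).length = B.card := Finset.length_sort _
  have hml : (X.sort (· ≤ ·)).length = X.card := Finset.length_sort _
  have hil : i < (B.sort (· ≤ ·)).length := by omega
  have him : i < (X.sort (· ≤ ·)).length := by omega
  rw [List.getD_eq_getElem _ _ hil, List.getD_eq_getElem _ _ him]
  by_contra hcon
  push_neg at hcon
  have h1 := countP_drop_ge (Finset.sortedLT_sort B).pairwise hil hcon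
  have h2 := countP_le_of_sorted (Finset.sortedLT_sort X).pairwise him
  have h3 := h ((X.sort (· ≤ ·))[i])
  rw [cntGT_eq_countP, cntGT_eq_countP] at h3
  omega


lemma galeLE_refl (X : Finset ℕ) : galeLE X X := gale_of_cnt rfl fun _ => le_rfl

lemma cntGT_insert {B : Finset ℕ} {a : ℕ} (h : a ∉ B) (x : ℕ) :
    cntGT (insert a B) x = cntGT B x + if x < a then 1 else 0 := by
  unfold cntGT
  rw [Finset.filter_insert]
  split
  · rw [Finset.card_insert_of_notMem (fun hc => h (Finset.mem_of_mem_filter a hc))]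
  · simp

lemma cntGT_erase {X : Finset ℕ} {a : ℕ} (h : a ∈ X) (x : ℕ) :
    cntGT X x = cntGT (X.erase a) x + if x < a then 1 else 0 := by
  conv_lhs => rw [← Finset.insert_erase h]
  exact cntGT_insert (Finset.notMem_erase a X) x

lemma cntLE_insert {B : Finset ℕ} {a : ℕ} (h : a ∉ B) (x : ℕ) :
    cntLE (insert a B) x = cntLE B x + if a ≤ x then 1 else 0 := by
  unfold cntLE
  rw [Finset.filter_insert]
  split
  · rw [Finset.card_insert_of_notMem (fun hc => h (Finset.mem_of_mem_filter a hc))]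
  · simp

lemma cntLE_erase {K : Finset ℕ} {a : ℕ} (h : a ∈ K) (x : ℕ) :
    cntLE K x = cntLE (K.erase a) x + if a ≤ x then 1 else 0 := by
  conv_lhs => rw [← Finset.insert_erase h]
  exact cntLE_insert (Finset.notMem_erase a K) x

lemma cntLE_erase_of_lt {K : Finset ℕ} {a x : ℕ} (h : x < a) :
    cntLE (K.erase a) x = cntLE K x := by
  by_cases ha : a ∈ K
  · rw [cntLE_erase ha x, if_neg (by omega)]
    simp
  · rw [Finset.erase_eq_of_notMem ha]

lemma cntGT_eq_zero {X : Finset ℕ} {x : ℕ} (h : ∀ s ∈ X, s ≤ x) : cntGT X x = 0 := by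
  unfold cntGT
  rw [Finset.card_eq_zero, Finset.filter_eq_empty_iff]
  intro s hs
  exact not_lt.mpr (h s hs)

lemma cntLE_eq_card {K : Finset ℕ} {x : ℕ} (h : ∀ s ∈ K, s ≤ x) : cntLE K x = K.card := by
  unfold cntLE
  rw [Finset.filter_true_of_mem h]

lemma le_schubertRank {n : ℕ} {X K B : Finset ℕ} (hB : B ⊆ Finset.Icc 1 n) (hg : galeLE B X) :
    (K ∩ B).card ≤ schubertRank n X K := by
  classical
  rw [schubertRank]
  apply Finset.le_sup (b := B)
  rw [Finset.mem_filter, Finset.mem_powerset]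
  exact ⟨hB, hg⟩

lemma exists_rank_max {n : ℕ} {X : Finset ℕ} (hX : X ⊆ Finset.Icc 1 n) (K : Finset ℕ) :
    ∃ B, B ⊆ Finset.Icc 1 n ∧ galeLE B X ∧ (K ∩ B).card = schubertRank n X K := by
  classical
  have hne : ((Finset.Icc 1 n).powerset.filter fun B => galeLE B X).Nonempty :=
    ⟨X, by rw [Finset.mem_filter, Finset.mem_powerset]; exact ⟨hX, galeLE_refl X⟩⟩
  obtain ⟨B, hB, hBe⟩ := Finset.exists_mem_eq_sup _ hne (fun B => (K ∩ B).card)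
  rw [Finset.mem_filter, Finset.mem_powerset] at hB
  exact ⟨B, hB.1, hB.2, by rw [schubertRank, hBe]⟩

lemma subset_Icc_of_erase_top {X : Finset ℕ} {n : ℕ} (hX : X ⊆ Finset.Icc 1 (n+1)) :
    X.erase (n+1) ⊆ Finset.Icc 1 n := by
  intro s hs
  rw [Finset.mem_erase] at hs
  have := hX hs.2
  rw [Finset.mem_Icc] at *
  omega

lemma range_nonempty' (n : ℕ) : (Finset.range (n+1)).Nonempty := ⟨0, by simp⟩

noncomputable def mval (n : ℕ) (X K : Finset ℕ) : ℕ :=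
  (Finset.range (n+1)).inf' (range_nonempty' n) (fun x => cntGT X x + cntLE K x)

lemma mval_le {n : ℕ} (X K : Finset ℕ) {x : ℕ} (hx : x ≤ n) :
    mval n X K ≤ cntGT X x + cntLE K x :=
  Finset.inf'_le _ (by simp; omega)

lemma exists_mval_min (n : ℕ) (X K : Finset ℕ) :
    ∃ x ≤ n, mval n X K = cntGT X x + cntLE K x := by
  obtain ⟨x, hx, he⟩ := Finset.exists_mem_eq_inf' (range_nonempty' n) (fun x => cntGT X x + cntLE K x)
  rw [Finset.mem_range] at hx
  exact ⟨x, by omega, by simpa [mval] using he⟩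

lemma rank_le_mval {n : ℕ} (X K : Finset ℕ) : schubertRank n X K ≤ mval n X K := by
  classical
  apply Finset.le_inf'
  intro x hx
  rw [schubertRank]
  apply Finset.sup_le
  intro B hB
  rw [Finset.mem_filter, Finset.mem_powerset] at hB
  obtain ⟨hBs, hBg⟩ := hB
  have h1 := (Finset.card_filter_add_card_filter_not
    (s := K ∩ B) (p := fun s => s ≤ x)).symm
  have h2 : ((K ∩ B).filter (fun s => s ≤ x)).card ≤ cntLE K x :=
    Finset.card_le_card (Finset.filter_subset_filter _ Finset.inter_subset_left)
  have h3 : ((K ∩ B).filter (fun s => ¬ s ≤ x)).card ≤ cntGT B x := by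
    apply Finset.card_le_card
    intro a ha
    rw [Finset.mem_filter] at ha ⊢
    exact ⟨(Finset.mem_inter.mp ha.1).2, by omega⟩
  have h4 := hBg.cntGT_le x
  omega

lemma mval_le_rank : ∀ n (X K : Finset ℕ), X ⊆ Finset.Icc 1 n → K ⊆ Finset.Icc 1 n →
    mval n X K ≤ schubertRank n X K := by
  intro n
  induction n with
  | zero =>
    intro X K hX hK
    have hX0 : X = ∅ := Finset.subset_empty.mp (by simpa using hX)
    have hK0 : K = ∅ := Finset.subset_empty.mp (by simpa using hK)
    subst hX0; subst hK0
    have : mval 0 ∅ ∅ ≤ 0 := by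
      have := mval_le (n := 0) ∅ ∅ (x := 0) le_rfl
      simpa [cntGT, cntLE] using this
    omega
  | succ n ih =>
    intro X K hX hK
    by_cases hnX : n + 1 ∈ X
    · -- n+1 ∈ X
      set X' := X.erase (n+1) with hX'def
      have hX' : X' ⊆ Finset.Icc 1 n := subset_Icc_of_erase_top hX
      have hcard : X.card = X'.card + 1 := by
        rw [hX'def, Finset.card_erase_of_mem hnX]
        have : 0 < X.card := Finset.card_pos.mpr ⟨n+1, hnX⟩
        omega
      by_cases hnK : n + 1 ∈ K
      · -- n+1 ∈ K too
        set K' := K.erase (n+1) with hK'def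
        have hK' : K' ⊆ Finset.Icc 1 n := subset_Icc_of_erase_top hK
        obtain ⟨B', hB's, hB'g, hB'max⟩ := exists_rank_max hX' K'
        have hnB' : n + 1 ∉ B' := fun h => by
          have := hB's h; rw [Finset.mem_Icc] at this; omega
        set B := insert (n+1) B' with hBdef
        have hBg : galeLE B X := by
          apply gale_of_cnt
          · rw [hBdef, Finset.card_insert_of_notMem hnB', hB'g.1, hcard]
          · intro x
            rw [hBdef, cntGT_insert hnB' x, cntGT_erase hnX x, ← hX'def]
            have := hB'g.cntGT_le x
            omega
        have hBs : B ⊆ Finset.Icc 1 (n+1) := by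
          rw [hBdef]
          intro s hs
          rw [Finset.mem_insert] at hs
          rcases hs with rfl | hs
          · rw [Finset.mem_Icc]; omega
          · have := hB's hs; rw [Finset.mem_Icc] at *; omega
        have hKB : (K ∩ B).card = (K' ∩ B').card + 1 := by
          have he : K ∩ B = insert (n+1) (K' ∩ B') := by
            ext a
            simp only [hBdef, hK'def, Finset.mem_inter, Finset.mem_insert, Finset.mem_erase]
            constructor
            · rintro ⟨haK, rfl | haB⟩
              · exact Or.inl rfl
              · by_cases h : a = n + 1
                · exact Or.inl h
                · exact Or.inr ⟨⟨h, haK⟩, haB⟩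
            · rintro (rfl | ⟨⟨_, haK⟩, haB⟩)
              · exact ⟨hnK, Or.inl rfl⟩
              · exact ⟨haK, Or.inr haB⟩
          rw [he, Finset.card_insert_of_notMem]
          rw [Finset.mem_inter]
          exact fun h => hnB' h.2
        have hrank : mval n X' K' + 1 ≤ schubertRank (n+1) X K := by
          have := le_schubertRank (K := K) hBs hBg
          have h2 := ih X' K' hX' hK'
          omega
        -- min side
        obtain ⟨x', hx'n, hx'e⟩ := exists_mval_min n X' K'
        have hmle : mval (n+1) X K ≤ mval n X' K' + 1 := by
          have h1 := mval_le (n := n+1) X K (x := x') (by omega)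
          rw [cntGT_erase hnX x', if_pos (by omega : x' < n+1)] at h1
          rw [cntLE_erase hnK x', if_neg (by omega : ¬ n+1 ≤ x')] at h1
          rw [← hX'def, ← hK'def] at h1
          omega
        omega
      · -- n+1 ∈ X, n+1 ∉ K
        have hKn : K ⊆ Finset.Icc 1 n := by
          intro s hs
          have := hK hs
          rw [Finset.mem_Icc] at *
          have : s ≠ n + 1 := fun h => hnK (h ▸ hs)
          omega
        by_cases hK0 : K = ∅
        · subst hK0
          have h1 := mval_le (n := n+1) X ∅ (x := n+1) le_rfl
          have h2 : cntGT X (n+1) = 0 := cntGT_eq_zero (fun s hs => by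
            have := hX hs; rw [Finset.mem_Icc] at this; omega)
          simp [cntLE] at h1
          omega
        · have hKne : K.Nonempty := Finset.nonempty_iff_ne_empty.mpr hK0
          set c := K.max' hKne with hcdef
          have hcK : c ∈ K := K.max'_mem hKne
          have hc1 : 1 ≤ c := by have := hK hcK; rw [Finset.mem_Icc] at this; omega
          have hcn : c ≤ n := by have := hKn hcK; rw [Finset.mem_Icc] at this; omega
          set K' := K.erase c with hK'def
          have hK' : K' ⊆ Finset.Icc 1 n := fun s hs => hKn (Finset.erase_subset _ _ hs)
          obtain ⟨B', hB's, hB'g, hB'max⟩ := exists_rank_max hX' K'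
          have hnB' : n + 1 ∉ B' := fun h => by
            have := hB's h; rw [Finset.mem_Icc] at this; omega
          set e := if c ∈ B' then n+1 else c with hedef
          have heB' : e ∉ B' := by
            rw [hedef]; split
            · exact hnB'
            · assumption
          have hen : e ≤ n + 1 := by rw [hedef]; split <;> omega
          set B := insert e B' with hBdef
          have hBg : galeLE B X := by
            apply gale_of_cnt
            · rw [hBdef, Finset.card_insert_of_notMem heB', hB'g.1, hcard]
            · intro x
              rw [hBdef, cntGT_insert heB' x, cntGT_erase hnX x, ← hX'def]
              have h6 := hB'g.cntGT_le x
              have h7 : (if x < e then (1:ℕ) else 0) ≤ if x < n+1 then 1 else 0 := by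
                split
                · rw [if_pos (by omega)]
                · omega
              omega
          have hBs : B ⊆ Finset.Icc 1 (n+1) := by
            rw [hBdef]
            intro s hs
            rw [Finset.mem_insert] at hs
            rcases hs with rfl | hs
            · rw [Finset.mem_Icc]; rw [hedef]; split <;> omega
            · have := hB's hs; rw [Finset.mem_Icc] at *; omega
          have hKB : (K' ∩ B').card + 1 ≤ (K ∩ B).card := by
            have hsub : insert c (K' ∩ B') ⊆ K ∩ B := by
              intro a ha
              rw [Finset.mem_insert] at ha
              rcases ha with rfl | ha
              · rw [Finset.mem_inter, hBdef, Finset.mem_insert]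
                refine ⟨hcK, ?_⟩
                rw [hedef]; split
                · exact Or.inr (by assumption)
                · exact Or.inl rfl
              · rw [Finset.mem_inter] at ha ⊢
                rw [hK'def] at ha
                exact ⟨Finset.erase_subset _ _ ha.1,
                  by rw [hBdef]; exact Finset.mem_insert_of_mem ha.2⟩
            calc (K' ∩ B').card + 1 = (insert c (K' ∩ B')).card := by
                  rw [Finset.card_insert_of_notMem]
                  rw [Finset.mem_inter, hK'def]
                  exact fun h => (Finset.notMem_erase c K) h.1
              _ ≤ (K ∩ B).card := Finset.card_le_card hsub
          have hrank : mval n X' K' + 1 ≤ schubertRank (n+1) X K := by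
            have := le_schubertRank (K := K) hBs hBg
            have h2 := ih X' K' hX' hK'
            omega
          obtain ⟨x', hx'n, hx'e⟩ := exists_mval_min n X' K'
          have hmle : mval (n+1) X K ≤ mval n X' K' + 1 := by
            by_cases hcx : x' < c
            · have h1 := mval_le (n := n+1) X K (x := x') (by omega)
              rw [cntGT_erase hnX x', if_pos (by omega : x' < n+1)] at h1
              rw [cntLE_erase hcK x', if_neg (by omega : ¬ c ≤ x')] at h1
              rw [← hX'def, ← hK'def] at h1
              omega
            · have h1 := mval_le (n := n+1) X K (x := n+1) le_rfl
              have h2 : cntGT X (n+1) = 0 := cntGT_eq_zero (fun s hs => by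
                have := hX hs; rw [Finset.mem_Icc] at this; omega)
              have h3 : cntLE K (n+1) = K.card := cntLE_eq_card (fun s hs => by
                have := hK hs; rw [Finset.mem_Icc] at this; omega)
              have h4 : K.card = K'.card + 1 := by
                rw [hK'def, Finset.card_erase_of_mem hcK]
                have : 0 < K.card := Finset.card_pos.mpr ⟨c, hcK⟩
                omega
              have h5 : cntLE K' x' = K'.card := cntLE_eq_card (fun s hs => by
                rw [hK'def, Finset.mem_erase] at hs
                have := K.le_max' s hs.2
                rw [← hcdef] at this
                have hne := hs.1
                omega)
              omega
          omega
    · -- n+1 ∉ X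
      have hXn : X ⊆ Finset.Icc 1 n := by
        intro s hs
        have := hX hs
        rw [Finset.mem_Icc] at *
        have : s ≠ n + 1 := fun h => hnX (h ▸ hs)
        omega
      set K' := K.erase (n+1) with hK'def
      have hK' : K' ⊆ Finset.Icc 1 n := subset_Icc_of_erase_top hK
      obtain ⟨B', hB's, hB'g, hB'max⟩ := exists_rank_max hXn K'
      have hrank : schubertRank n X K' ≤ schubertRank (n+1) X K := by
        have h1 := le_schubertRank (K := K)
          (hB's.trans (Finset.Icc_subset_Icc le_rfl (by omega : n ≤ n+1))) hB'g
        have h2 : (K' ∩ B').card ≤ (K ∩ B').card :=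
          Finset.card_le_card (Finset.inter_subset_inter (Finset.erase_subset _ _) le_rfl)
        omega
      obtain ⟨x', hx'n, hx'e⟩ := exists_mval_min n X K'
      have hmle : mval (n+1) X K ≤ mval n X K' := by
        have h1 := mval_le (n := n+1) X K (x := x') (by omega)
        rw [← cntLE_erase_of_lt (a := n+1) (K := K) (by omega : x' < n+1), ← hK'def] at h1
        omega
      have := ih X K' hXn hK'
      omega

lemma schubertRank_eq_mval {n : ℕ} {X K : Finset ℕ} (hX : X ⊆ Finset.Icc 1 n)
    (hK : K ⊆ Finset.Icc 1 n) : schubertRank n X K = mval n X K :=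
  _root_.le_antisymm (rank_le_mval X K) (mval_le_rank n X K hX hK)

lemma inf'_sub_single {D : Finset ℕ} (hD : D.Nonempty) (ψ : ℕ → ℤ) {a : ℕ} (ha : a ∈ D) :
    D.inf' hD (fun x => ψ x - if x = a then 1 else 0) = min (D.inf' hD ψ) (ψ a - 1) := by
  apply _root_.le_antisymm
  · apply le_min
    · apply Finset.le_inf'
      intro x hx
      calc D.inf' hD (fun x => ψ x - if x = a then 1 else 0) ≤ ψ x - if x = a then 1 else 0 :=
            Finset.inf'_le _ hx
        _ ≤ ψ x := by split <;> omega
    · calc D.inf' hD (fun x => ψ x - if x = a then 1 else 0) ≤ ψ a - if a = a then 1 else 0 :=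
            Finset.inf'_le _ ha
        _ = ψ a - 1 := by simp
  · apply Finset.le_inf'
    intro x hx
    by_cases h : x = a
    · subst h; simp
    · rw [if_neg h]
      have : D.inf' hD ψ ≤ ψ x := Finset.inf'_le _ hx
      omega

lemma inf'_le_of_mem {D : Finset ℕ} (hD : D.Nonempty) (ψ : ℕ → ℤ) {a : ℕ} (ha : a ∈ D) :
    D.inf' hD ψ ≤ ψ a := Finset.inf'_le _ ha

lemma lemmaA : ∀ (P : Finset ℕ) (D : Finset ℕ) (hD : D.Nonempty), P ⊆ D → ∀ ψ : ℕ → ℤ,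
    (∑ T ∈ P.powerset, (-1:ℤ) ^ T.card * D.inf' hD (fun x => ψ x - if x ∈ T then 1 else 0)) =
      if h : P.Nonempty then (if ∀ p ∈ P, ψ p = D.inf' hD ψ then 1 else 0)
      else D.inf' hD ψ := by
  intro P
  induction P using Finset.induction_on with
  | empty =>
    intro D hD _ ψ
    simp
  | @insert a P ha ih =>
    intro D hD hPD ψ
    have haD : a ∈ D := hPD (Finset.mem_insert_self a P)
    have hPD' : P ⊆ D := fun x hx => hPD (Finset.mem_insert_of_mem hx)
    rw [Finset.sum_powerset_insert ha]
    have h2 : ∀ T ∈ P.powerset,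
        (-1:ℤ) ^ (insert a T).card * D.inf' hD (fun x => ψ x - if x ∈ insert a T then 1 else 0)
        = -((-1:ℤ) ^ T.card * D.inf' hD (fun x => (fun y => ψ y - if y = a then 1 else 0) x
            - if x ∈ T then 1 else 0)) := by
      intro T hT
      rw [Finset.mem_powerset] at hT
      have haT : a ∉ T := fun h => ha (hT h)
      rw [Finset.card_insert_of_notMem haT, pow_succ]
      have : (fun x => ψ x - if x ∈ insert a T then 1 else 0)
          = (fun x => (ψ x - if x = a then 1 else 0) - if x ∈ T then 1 else 0) := by
        funext x
        by_cases hx : x = a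
        · subst hx
          simp [haT]
        · simp [hx, Finset.mem_insert]
      rw [this]
      ring
    rw [Finset.sum_congr rfl h2, Finset.sum_neg_distrib]
    rw [ih D hD hPD' ψ, ih D hD hPD' (fun y => ψ y - if y = a then 1 else 0)]
    set m := D.inf' hD ψ with hm
    have hma : D.inf' hD (fun y => ψ y - if y = a then 1 else 0) = min m (ψ a - 1) :=
      inf'_sub_single hD ψ haD
    have hinsne : (insert a P).Nonempty := Finset.insert_nonempty a P
    rw [dif_pos hinsne, hma]
    have hpa : ∀ p ∈ P, (fun y => ψ y - if y = a then 1 else 0) p = ψ p := by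
      intro p hp
      have : p ≠ a := fun h => ha (h ▸ hp)
      simp [this]
    have hψa : m ≤ ψ a := inf'_le_of_mem hD ψ haD
    by_cases hP : P.Nonempty
    · rw [dif_pos hP, dif_pos hP]
      by_cases ham : ψ a = m
      · have hmin : min m (ψ a - 1) = m - 1 := by omega
        rw [hmin]
        have hfalse : ¬ (∀ p ∈ P, (fun y => ψ y - if y = a then 1 else 0) p = m - 1) := by
          intro hcon
          obtain ⟨p, hp⟩ := hP
          have h1 := hcon p hp
          rw [hpa p hp] at h1
          have h2 : m ≤ ψ p := inf'_le_of_mem hD ψ (hPD' hp)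
          omega
        rw [if_neg hfalse]
        have : (∀ p ∈ insert a P, ψ p = m) ↔ (∀ p ∈ P, ψ p = m) := by
          constructor
          · intro h p hp; exact h p (Finset.mem_insert_of_mem hp)
          · intro h p hp
            rcases Finset.mem_insert.mp hp with rfl | hp
            · exact ham
            · exact h p hp
        by_cases hall : ∀ p ∈ P, ψ p = m
        · rw [if_pos hall, if_pos (this.mpr hall)]; ring
        · rw [if_neg hall, if_neg (fun hc => hall (this.mp hc))]; ring
      · have hmin : min m (ψ a - 1) = m := by omega
        rw [hmin]
        have heq : (∀ p ∈ P, (fun y => ψ y - if y = a then 1 else 0) p = m) ↔ (∀ p ∈ P, ψ p = m) := by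
          constructor
          · intro h p hp; have := h p hp; rwa [hpa p hp] at this
          · intro h p hp; rw [hpa p hp]; exact h p hp
        have hins : ¬ (∀ p ∈ insert a P, ψ p = m) := fun hc =>
          ham (hc a (Finset.mem_insert_self a P))
        rw [if_neg hins]
        by_cases hall : ∀ p ∈ P, ψ p = m
        · rw [if_pos hall, if_pos (heq.mpr hall)]; ring
        · rw [if_neg hall, if_neg (fun hc => hall (heq.mp hc))]; ring
    · rw [dif_neg hP, dif_neg hP]
      have hPe : P = ∅ := Finset.not_nonempty_iff_eq_empty.mp hP
      subst hPe
      simp only [Finset.mem_insert, Finset.notMem_empty, or_false, forall_eq]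
      by_cases ham : ψ a = m
      · rw [if_pos (by simpa using ham)]
        omega
      · rw [if_neg (by simpa using ham)]
        omega

def Qset (n : ℕ) (J : Finset ℕ) : Finset ℕ :=
  (Finset.range (n+1)).filter (fun p => p ∉ J ∧ (p+1 ∈ J ∨ p = n))

def appT (J T : Finset ℕ) : Finset ℕ := (J \ T.image (· + 1)) ∪ (T.erase 0)

open Finset

lemma appT_subset {n : ℕ} {J T : Finset ℕ} (hJ : J ⊆ Finset.Icc 1 n) (hT : T ⊆ Qset n J) :
    appT J T ⊆ Finset.Icc 1 n := by
  intro a ha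
  rw [appT, Finset.mem_union] at ha
  rcases ha with ha | ha
  · exact hJ (Finset.mem_sdiff.mp ha).1
  · rw [Finset.mem_erase] at ha
    have := hT ha.2
    rw [Qset, Finset.mem_filter, Finset.mem_range] at this
    rw [Finset.mem_Icc]
    omega

lemma cntGT_union_disj {A B : Finset ℕ} (h : Disjoint A B) (x : ℕ) :
    cntGT (A ∪ B) x = cntGT A x + cntGT B x := by
  unfold cntGT
  rw [Finset.filter_union, Finset.card_union_of_disjoint (Finset.disjoint_filter_filter h)]

lemma appT_cntGT {n : ℕ} {J T : Finset ℕ} (hJ : J ⊆ Finset.Icc 1 n) (hT : T ⊆ Qset n J)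
    {x : ℕ} (hx : x ≤ n) :
    (cntGT (appT J T) x : ℤ) = (cntGT J x : ℤ) + (if n ∈ T then 1 else 0)
      - (if x ∈ T then 1 else 0) := by
  classical
  have hTmem : ∀ t ∈ T, t ∉ J ∧ (t+1 ∈ J ∨ t = n) ∧ t ≤ n := by
    intro t ht
    have := hT ht
    rw [Qset, Finset.mem_filter, Finset.mem_range] at this
    exact ⟨this.2.1, this.2.2, by omega⟩
  -- step 1: split the union
  have hdisj : Disjoint (J \ T.image (· + 1)) (T.erase 0) := by
    rw [Finset.disjoint_right]
    intro a ha hb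
    rw [Finset.mem_erase] at ha
    exact (hTmem a ha.2).1 (Finset.mem_sdiff.mp hb).1
  have h1 : cntGT (appT J T) x = cntGT (J \ T.image (· + 1)) x + cntGT (T.erase 0) x :=
    cntGT_union_disj hdisj x
  -- step 2: J = (J \ A) ∪ (J ∩ A)
  have h2 : cntGT J x = cntGT (J \ T.image (· + 1)) x + cntGT (J ∩ T.image (· + 1)) x := by
    conv_lhs => rw [← Finset.sdiff_union_inter J (T.image (· + 1))]
    exact cntGT_union_disj (Finset.disjoint_sdiff_inter J _) x
  -- step 3: J ∩ A = image of T.erase n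
  have h3 : J ∩ T.image (· + 1) = (T.erase n).image (· + 1) := by
    ext a
    simp only [Finset.mem_inter, Finset.mem_image, Finset.mem_erase]
    constructor
    · rintro ⟨haJ, t, ht, rfl⟩
      refine ⟨t, ⟨?_, ht⟩, rfl⟩
      intro h
      subst h
      have := hJ haJ
      rw [Finset.mem_Icc] at this
      omega
    · rintro ⟨t, ⟨htn, ht⟩, rfl⟩
      obtain ⟨_, h, _⟩ := hTmem t ht
      rcases h with h | h
      · exact ⟨h, t, ht, rfl⟩
      · exact absurd h htn
  -- step 4: count in image
  have h4 : cntGT ((T.erase n).image (· + 1)) x = ((T.erase n).filter (fun t => x ≤ t)).card := by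
    unfold cntGT
    rw [Finset.filter_image]
    rw [Finset.card_image_of_injective _ (fun a b h => by omega)]
    congr 1
    ext t
    simp only [Finset.mem_filter]
    constructor
    · rintro ⟨ht, h⟩; exact ⟨ht, by omega⟩
    · rintro ⟨ht, h⟩; exact ⟨ht, by omega⟩
  -- step 5: erase-0 count
  have h5 : cntGT (T.erase 0) x = (T.filter (fun t => x < t)).card := by
    unfold cntGT
    congr 1
    ext t
    simp only [Finset.mem_filter, Finset.mem_erase]
    constructor
    · rintro ⟨⟨_, ht⟩, h⟩; exact ⟨ht, h⟩
    · rintro ⟨ht, h⟩; exact ⟨⟨by omega, ht⟩, h⟩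
  -- step 6 : erase-n ≤-count
  have h6 : ((T.erase n).filter (fun t => x ≤ t)).card + (if n ∈ T then 1 else 0)
      = (T.filter (fun t => x ≤ t)).card := by
    have hswap : (T.erase n).filter (fun t => x ≤ t) = (T.filter (fun t => x ≤ t)).erase n := by
      ext t
      simp only [Finset.mem_filter, Finset.mem_erase]
      tauto
    rw [hswap]
    by_cases hn : n ∈ T
    · rw [if_pos hn, Finset.card_erase_of_mem (s := T.filter (fun t => x ≤ t)) (Finset.mem_filter.mpr ⟨hn, hx⟩)]
      have : 0 < (T.filter (fun t => x ≤ t)).card :=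
        Finset.card_pos.mpr ⟨n, Finset.mem_filter.mpr ⟨hn, hx⟩⟩
      omega
    · rw [if_neg hn, Finset.erase_eq_of_notMem (fun hc => hn (Finset.mem_of_mem_filter n hc))]
      omega
  -- step 7: ≤-count vs <-count
  have h7 : (T.filter (fun t => x ≤ t)).card = (T.filter (fun t => x < t)).card
      + (if x ∈ T then 1 else 0) := by
    by_cases hxT : x ∈ T
    · rw [if_pos hxT]
      have : T.filter (fun t => x ≤ t) = insert x (T.filter (fun t => x < t)) := by
        ext t
        simp only [Finset.mem_filter, Finset.mem_insert]
        constructor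
        · rintro ⟨ht, hle⟩
          rcases Nat.lt_or_ge x t with h | h
          · exact Or.inr ⟨ht, h⟩
          · exact Or.inl (by omega)
        · rintro (rfl | ⟨ht, hlt⟩)
          · exact ⟨hxT, le_rfl⟩
          · exact ⟨ht, by omega⟩
      rw [this, Finset.card_insert_of_notMem (fun hc => by
        have := (Finset.mem_filter.mp hc).2; omega)]
    · rw [if_neg hxT]
      congr 1
      ext t
      simp only [Finset.mem_filter]
      constructor
      · rintro ⟨ht, hle⟩
        refine ⟨ht, lt_of_le_of_ne hle ?_⟩
        intro hc
        subst hc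
        exact hxT ht
      · rintro ⟨ht, hlt⟩
        exact ⟨ht, le_of_lt hlt⟩
  rw [h3, h4] at h2
  rw [h1, h5]
  by_cases hnT : n ∈ T <;> by_cases hxT2 : x ∈ T <;>
      simp only [hnT, hxT2, if_true, if_false] <;>
    simp only [hnT, hxT2, if_true, if_false] at h6 h7 <;> push_cast <;> omega


noncomputable def psiF (n : ℕ) (J K : Finset ℕ) : ℕ → ℤ :=
  fun x => (cntGT J x : ℤ) + (cntLE K x : ℤ)

lemma psi_step (n : ℕ) (J K : Finset ℕ) (x : ℕ) :
    psiF n J K (x+1) = psiF n J K x + (if x+1 ∈ K then 1 else 0)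
      - (if x+1 ∈ J then 1 else 0) := by
  unfold psiF
  have h1 : cntGT J x = cntGT J (x+1) + (if x+1 ∈ J then 1 else 0) := by
    unfold cntGT
    by_cases h : x + 1 ∈ J
    · rw [if_pos h]
      have : J.filter (fun s => x < s) = insert (x+1) (J.filter (fun s => x+1 < s)) := by
        ext t
        simp only [Finset.mem_filter, Finset.mem_insert]
        constructor
        · rintro ⟨ht, hlt⟩
          rcases Nat.lt_or_ge (x+1) t with h' | h'
          · exact Or.inr ⟨ht, h'⟩
          · exact Or.inl (by omega)
        · rintro (rfl | ⟨ht, hlt⟩)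
          · exact ⟨h, by omega⟩
          · exact ⟨ht, by omega⟩
      rw [this, Finset.card_insert_of_notMem (fun hc => by
        have := (Finset.mem_filter.mp hc).2; omega)]
    · rw [if_neg h]
      congr 1
      ext t
      simp only [Finset.mem_filter]
      constructor
      · rintro ⟨ht, hlt⟩
        refine ⟨ht, ?_⟩
        rcases Nat.lt_or_ge (x+1) t with h' | h'
        · exact h'
        · have : t = x + 1 := by omega
          exact absurd (this ▸ ht) h
      · rintro ⟨ht, hlt⟩; exact ⟨ht, by omega⟩
  have h2 : cntLE K (x+1) = cntLE K x + (if x+1 ∈ K then 1 else 0) := by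
    unfold cntLE
    by_cases h : x + 1 ∈ K
    · rw [if_pos h]
      have : K.filter (fun s => s ≤ x+1) = insert (x+1) (K.filter (fun s => s ≤ x)) := by
        ext t
        simp only [Finset.mem_filter, Finset.mem_insert]
        constructor
        · rintro ⟨ht, hle⟩
          rcases Nat.lt_or_ge x t with h' | h'
          · exact Or.inl (by omega)
          · exact Or.inr ⟨ht, h'⟩
        · rintro (rfl | ⟨ht, hle⟩)
          · exact ⟨h, le_rfl⟩
          · exact ⟨ht, by omega⟩
      rw [this, Finset.card_insert_of_notMem (fun hc => by
        have := (Finset.mem_filter.mp hc).2; omega)]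
    · rw [if_neg h]
      congr 1
      ext t
      simp only [Finset.mem_filter]
      constructor
      · rintro ⟨ht, hle⟩
        refine ⟨ht, ?_⟩
        rcases Nat.lt_or_ge x t with h' | h'
        · have : t = x + 1 := by omega
          exact absurd (this ▸ ht) h
        · exact h'
      · rintro ⟨ht, hle⟩; exact ⟨ht, by omega⟩
  rw [h2]
  have := h1
  push_cast [this]
  ring

lemma psi_const_of_eq {n : ℕ} {J : Finset ℕ} (hJ : J ⊆ Finset.Icc 1 n) (x : ℕ) :
    psiF n J J x = (J.card : ℤ) := by
  unfold psiF cntGT cntLE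
  have hdis : Disjoint (J.filter (fun s => x < s)) (J.filter (fun s => s ≤ x)) := by
    rw [Finset.disjoint_left]
    intro a ha hb
    have h1 := (Finset.mem_filter.mp ha).2
    have h2 := (Finset.mem_filter.mp hb).2
    omega
  have hun : J.filter (fun s => x < s) ∪ J.filter (fun s => s ≤ x) = J := by
    ext t
    simp only [Finset.mem_union, Finset.mem_filter]
    constructor
    · rintro (⟨h, _⟩ | ⟨h, _⟩) <;> exact h
    · intro h
      rcases Nat.lt_or_ge x t with h' | h'
      · exact Or.inl ⟨h, h'⟩
      · exact Or.inr ⟨h, h'⟩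
  have hcard : (J.filter (fun s => x < s)).card + (J.filter (fun s => s ≤ x)).card = J.card := by
    rw [← Finset.card_union_of_disjoint hdis, hun]
  push_cast [← hcard]
  ring

lemma Qclaim {n : ℕ} {J K : Finset ℕ} (hJ : J ⊆ Finset.Icc 1 n) (hK : K ⊆ Finset.Icc 1 n)
    (hJne : J.Nonempty) :
    (∀ q ∈ Qset n J, psiF n J K q =
      (Finset.range (n+1)).inf' (range_nonempty' n) (psiF n J K)) ↔ K = J := by
  constructor
  swap
  · rintro rfl
    intro q hq
    rw [psi_const_of_eq hJ]
    apply _root_.le_antisymm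
    · apply Finset.le_inf'
      intro x _
      rw [psi_const_of_eq hJ]
    · exact Finset.inf'_le _ (by
        rw [Qset, Finset.mem_filter] at hq
        exact hq.1) |>.trans (le_of_eq (psi_const_of_eq hJ q))
  · intro hQ
    set ψ := psiF n J K with hψdef
    set m := (Finset.range (n+1)).inf' (range_nonempty' n) ψ with hmdef
    have hmle : ∀ x ≤ n, m ≤ ψ x := fun x hx =>
      Finset.inf'_le _ (Finset.mem_range.mpr (by omega))
    -- main claim : ψ is constantly m on [0,n]
    have hconst : ∀ x ≤ n, ψ x = m := by
      by_contra hcon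
      push_neg at hcon
      have hSne : ((Finset.range (n+1)).filter (fun x => ψ x ≠ m)).Nonempty := by
        obtain ⟨x, hx, hne⟩ := hcon
        exact ⟨x, Finset.mem_filter.mpr ⟨Finset.mem_range.mpr (by omega), hne⟩⟩
      set x₀ := ((Finset.range (n+1)).filter (fun x => ψ x ≠ m)).max' hSne with hx₀def
      have hx₀mem := ((Finset.range (n+1)).filter (fun x => ψ x ≠ m)).max'_mem hSne
      rw [Finset.mem_filter, Finset.mem_range] at hx₀mem
      have hx₀n : x₀ ≤ n := by omega
      have hx₀gt : m < ψ x₀ := lt_of_le_of_ne (hmle x₀ hx₀n) (Ne.symm hx₀mem.2)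
      have hmax : ∀ y, y ≤ n → x₀ < y → ψ y = m := by
        intro y hy hxy
        by_contra hne
        have : y ≤ x₀ := Finset.le_max' _ y (Finset.mem_filter.mpr
          ⟨Finset.mem_range.mpr (by omega), hne⟩)
        omega
      -- x₀ ∈ J
      have hx₀J : x₀ ∈ J := by
        by_contra hx₀J
        have hQmem : x₀ ∈ Qset n J := by
          rw [Qset, Finset.mem_filter, Finset.mem_range]
          refine ⟨by omega, hx₀J, ?_⟩
          rcases Nat.lt_or_ge x₀ n with hlt | hge
          · left
            have hy := hmax (x₀+1) (by omega) (by omega)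
            have hstep := psi_step n J K x₀
            rw [← hψdef] at hstep
            rw [hy] at hstep
            by_contra hnJ
            rw [if_neg hnJ] at hstep
            split at hstep <;> omega
          · right; omega
        have := hQ x₀ hQmem
        omega
      -- descent
      have hdescent : ∀ k, k ≤ x₀ → (x₀ - k ∈ J ∧ m < ψ (x₀ - k)) := by
        intro k
        induction k with
        | zero => intro _; simpa using ⟨hx₀J, hx₀gt⟩
        | succ k ihk =>
          intro hk
          obtain ⟨hyJ, hygt⟩ := ihk (by omega)
          set y := x₀ - k with hydef
          have hy1 : 1 ≤ y := by omega
          have hyn : y ≤ n := by omega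
          have hstep := psi_step n J K (y - 1)
          rw [← hψdef] at hstep
          rw [(by omega : y - 1 + 1 = y)] at hstep
          rw [if_pos hyJ] at hstep
          have hprev : m < ψ (y - 1) := by
            split at hstep <;> omega
          have hprevJ : y - 1 ∈ J := by
            by_contra hnJ
            have hQmem : y - 1 ∈ Qset n J := by
              rw [Qset, Finset.mem_filter, Finset.mem_range]
              refine ⟨by omega, hnJ, Or.inl (by rwa [(by omega : y - 1 + 1 = y)])⟩
            have := hQ _ hQmem
            omega
          have : x₀ - (k+1) = y - 1 := by omega
          rw [this]
          exact ⟨hprevJ, hprev⟩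
      have h0 := (hdescent x₀ le_rfl).1
      rw [Nat.sub_self] at h0
      have := hJ h0
      rw [Finset.mem_Icc] at this
      omega
    -- conclude K = J
    ext t
    by_cases ht : 1 ≤ t ∧ t ≤ n
    · obtain ⟨ht1, htn⟩ := ht
      have hstep := psi_step n J K (t - 1)
      rw [← hψdef] at hstep
      rw [(by omega : t - 1 + 1 = t)] at hstep
      rw [hconst t htn, hconst (t-1) (by omega)] at hstep
      constructor
      · intro hK'
        rw [if_pos hK'] at hstep
        by_contra hJ'
        rw [if_neg hJ'] at hstep
        omega
      · intro hJ'
        rw [if_pos hJ'] at hstep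
        by_contra hK'
        rw [if_neg hK'] at hstep
        omega
    · constructor
      · intro h
        have := hK h
        rw [Finset.mem_Icc] at this
        omega
      · intro h
        have := hJ h
        rw [Finset.mem_Icc] at this
        omega

lemma inf'_add_const {D : Finset ℕ} (hD : D.Nonempty) (f : ℕ → ℤ) (c : ℤ) :
    D.inf' hD (fun x => f x + c) = D.inf' hD f + c := by
  obtain ⟨a, ha, hae⟩ := Finset.exists_mem_eq_inf' hD f
  obtain ⟨b, hb, hbe⟩ := Finset.exists_mem_eq_inf' hD (fun x => f x + c)
  apply _root_.le_antisymm
  · rw [hae]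
    exact Finset.inf'_le _ ha
  · rw [hbe]
    have : D.inf' hD f ≤ f b := Finset.inf'_le _ hb
    omega

lemma Qset_subset_range (n : ℕ) (J : Finset ℕ) : Qset n J ⊆ Finset.range (n+1) :=
  Finset.filter_subset _ _

lemma Qset_exists_lt {n : ℕ} {J : Finset ℕ} (hJ : J ⊆ Finset.Icc 1 n) (hJne : J.Nonempty) :
    ∃ q ∈ Qset n J, q < n := by
  set b := J.min' hJne with hbdef
  have hbJ : b ∈ J := J.min'_mem hJne
  have hb : 1 ≤ b ∧ b ≤ n := by have := hJ hbJ; rwa [Finset.mem_Icc] at this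
  refine ⟨b - 1, ?_, by omega⟩
  rw [Qset, Finset.mem_filter, Finset.mem_range]
  refine ⟨by omega, ?_, Or.inl (by rwa [(by omega : b - 1 + 1 = b)])⟩
  intro hc
  have := J.min'_le _ hc
  omega

lemma keySum {n : ℕ} {J K : Finset ℕ} (hJ : J ⊆ Finset.Icc 1 n) (hJne : J.Nonempty)
    (hK : K ⊆ Finset.Icc 1 n) :
    ∑ T ∈ (Qset n J).powerset, (-1:ℤ) ^ T.card * (schubertRank n (appT J T) K : ℤ)
      = if J = K then 1 else 0 := by
  classical
  obtain ⟨q₀, hq₀Q, hq₀n⟩ := Qset_exists_lt hJ hJne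
  have hQne : (Qset n J).Nonempty := ⟨q₀, hq₀Q⟩
  set D := Finset.range (n+1) with hDdef
  have hD : D.Nonempty := range_nonempty' n
  set ψ := psiF n J K with hψdef
  -- rewrite each term
  have hterm : ∀ T ∈ (Qset n J).powerset,
      (-1:ℤ) ^ T.card * (schubertRank n (appT J T) K : ℤ)
      = (-1:ℤ) ^ T.card * D.inf' hD (fun x => (ψ x + 1) - if x ∈ T then 1 else 0)
        - (-1:ℤ) ^ T.card * (if n ∈ T then 0 else 1) := by
    intro T hT
    rw [Finset.mem_powerset] at hT
    rw [schubertRank_eq_mval (appT_subset hJ hT) hK]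
    have hcast : ((mval n (appT J T) K : ℕ) : ℤ)
        = D.inf' hD (fun x => ((cntGT (appT J T) x : ℤ) + (cntLE K x : ℤ))) := by
      rw [mval]
      rw [Finset.apply_inf'_eq_inf'_comp hD (fun m : ℕ => (m : ℤ))
        (fun x y => by push_cast [Nat.cast_min]; rfl)]
      apply Finset.inf'_congr hD rfl
      intro x _
      push_cast
      simp [Function.comp]
    rw [hcast]
    have hcongr : D.inf' hD (fun x => ((cntGT (appT J T) x : ℤ) + (cntLE K x : ℤ)))
        = D.inf' hD (fun x => (ψ x + (if n ∈ T then 1 else 0)) - if x ∈ T then 1 else 0) := by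
      apply Finset.inf'_congr hD rfl
      intro x hx
      rw [hDdef, Finset.mem_range] at hx
      rw [appT_cntGT hJ hT (by omega : x ≤ n)]
      rw [hψdef]
      unfold psiF
      ring
    rw [hcongr]
    by_cases hnT : n ∈ T
    · simp only [hnT, if_true]
      ring
    · simp only [hnT, if_false]
      have : D.inf' hD (fun x => (ψ x + 0) - if x ∈ T then 1 else 0)
          = D.inf' hD (fun x => ((ψ x + 1) - if x ∈ T then 1 else 0) + (-1)) := by
        congr 1
        funext x
        ring
      rw [this, inf'_add_const]
      ring
  rw [Finset.sum_congr rfl hterm, Finset.sum_sub_distrib]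
  -- second sum vanishes
  have hsecond : ∑ T ∈ (Qset n J).powerset, (-1:ℤ) ^ T.card * (if n ∈ T then 0 else 1) = 0 := by
    by_cases hnQ : n ∈ Qset n J
    · have hQ' : Qset n J = insert n ((Qset n J).erase n) := (Finset.insert_erase hnQ).symm
      rw [hQ', Finset.sum_powerset_insert (Finset.notMem_erase n _)]
      have hz1 : ∀ T ∈ ((Qset n J).erase n).powerset,
          (-1:ℤ) ^ T.card * (if n ∈ T then 0 else 1) = (-1:ℤ) ^ T.card := by
        intro T hT
        rw [Finset.mem_powerset] at hT
        rw [if_neg (fun hc => Finset.notMem_erase n _ (hT hc))]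
        ring
      have hz2 : ∀ T ∈ ((Qset n J).erase n).powerset,
          (-1:ℤ) ^ (insert n T).card * (if n ∈ insert n T then 0 else 1) = 0 := by
        intro T _
        rw [if_pos (Finset.mem_insert_self n T)]
        ring
      rw [Finset.sum_congr rfl hz1, Finset.sum_congr rfl hz2, Finset.sum_const_zero, add_zero]
      rw [Finset.sum_powerset_neg_one_pow_card]
      rw [if_neg]
      intro hc
      have : q₀ ∈ (Qset n J).erase n := Finset.mem_erase.mpr ⟨by omega, hq₀Q⟩
      rw [hc] at this
      exact absurd this (Finset.notMem_empty q₀)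
    · have hz1 : ∀ T ∈ (Qset n J).powerset,
          (-1:ℤ) ^ T.card * (if n ∈ T then 0 else 1) = (-1:ℤ) ^ T.card := by
        intro T hT
        rw [Finset.mem_powerset] at hT
        rw [if_neg (fun hc => hnQ (hT hc))]
        ring
      rw [Finset.sum_congr rfl hz1, Finset.sum_powerset_neg_one_pow_card, if_neg hQne.ne_empty]
  rw [hsecond, sub_zero]
  -- first sum via lemmaA
  have hA := lemmaA (Qset n J) D hD (Qset_subset_range n J) (fun x => ψ x + 1)
  rw [hA, dif_pos hQne]
  rw [inf'_add_const hD ψ 1]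
  have hiff := Qclaim hJ hK hJne
  by_cases hKJ : K = J
  · have hall := hiff.mpr hKJ
    rw [if_pos, if_pos hKJ.symm]
    intro p hp
    exact congrArg (· + 1) (hall p hp)
  · rw [if_neg (show ¬(J = K) from fun hc => hKJ hc.symm), if_neg]
    intro hc
    apply hKJ
    apply hiff.mp
    intro q hq
    have h2 := hc q hq
    have h3 : ψ q = D.inf' hD ψ := by omega
    exact h3

lemma schubertRank_empty_left (n : ℕ) (K : Finset ℕ) : schubertRank n ∅ K = 0 := by
  classical
  rw [schubertRank]
  apply Nat.le_antisymm _ (Nat.zero_le _)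
  apply Finset.sup_le
  intro B hB
  rw [Finset.mem_filter] at hB
  have hBc : B.card = 0 := by simpa using hB.2.1
  rw [Finset.card_eq_zero] at hBc
  subst hBc
  simp

lemma schubertRank_empty_right (n : ℕ) (I : Finset ℕ) : schubertRank n I ∅ = 0 := by
  classical
  rw [schubertRank]
  apply Nat.le_antisymm _ (Nat.zero_le _)
  apply Finset.sup_le
  intro B _
  simp


end SchubertAux

theorem stmt_6 (n : ℕ) (hn : 1 ≤ n) (f : Finset ℕ → ℤ) (hf : f ∅ = 0) :
    ∃! c : Finset ℕ → ℤ,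
      (∀ I : Finset ℕ, I ∉ ((Finset.Icc 1 n).powerset.erase ∅) → c I = 0) ∧
      ∀ J ⊆ Finset.Icc 1 n,
        f J = ∑ I ∈ (Finset.Icc 1 n).powerset.erase ∅,
          c I * (schubertRank n I J : ℤ) := by
  classical
  set NE : Finset (Finset ℕ) := (Finset.Icc 1 n).powerset.erase ∅ with hNEdef
  have hmemNE : ∀ {I : Finset ℕ}, I ∈ NE ↔ (I ⊆ Finset.Icc 1 n ∧ I.Nonempty) := by
    intro I
    rw [hNEdef, Finset.mem_erase, Finset.mem_powerset, Finset.nonempty_iff_ne_empty]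
    tauto
  set α := {x : Finset ℕ // x ∈ NE} with hαdef
  set Mmat : Matrix α α ℤ := fun I Kk => (schubertRank n I.val Kk.val : ℤ) with hMdef
  set Nmat : Matrix α α ℤ := fun Jj I =>
    ∑ T ∈ (Qset n Jj.val).powerset, if appT Jj.val T = I.val then (-1:ℤ)^T.card else 0
    with hNdef
  have hNM : Nmat * Mmat = 1 := by
    ext Jj Kk
    rw [Matrix.mul_apply]
    have hJsub : Jj.val ⊆ Finset.Icc 1 n := (hmemNE.mp Jj.prop).1
    have hJne : Jj.val.Nonempty := (hmemNE.mp Jj.prop).2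
    have hKsub : Kk.val ⊆ Finset.Icc 1 n := (hmemNE.mp Kk.prop).1
    have step1 : ∀ I : α, Nmat Jj I * Mmat I Kk
        = ∑ T ∈ (Qset n Jj.val).powerset,
            if appT Jj.val T = I.val then (-1:ℤ)^T.card * (schubertRank n I.val Kk.val : ℤ)
            else 0 := by
      intro I
      rw [hNdef, hMdef, Finset.sum_mul]
      apply Finset.sum_congr rfl
      intro T _
      split
      · ring
      · ring
    rw [Finset.sum_congr rfl (fun I _ => step1 I), Finset.sum_comm]
    have step2 : ∀ T ∈ (Qset n Jj.val).powerset,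
        (∑ I : α, if appT Jj.val T = I.val then
            (-1:ℤ)^T.card * (schubertRank n I.val Kk.val : ℤ) else 0)
        = (-1:ℤ)^T.card * (schubertRank n (appT Jj.val T) Kk.val : ℤ) := by
      intro T hT
      rw [Finset.mem_powerset] at hT
      by_cases happ : appT Jj.val T ∈ NE
      · rw [Finset.sum_eq_single_of_mem (⟨appT Jj.val T, happ⟩ : α) (Finset.mem_univ _)]
        · rw [if_pos rfl]
        · intro b _ hb
          rw [if_neg]
          intro hc
          exact hb (Subtype.ext hc.symm)
      · have happ' : appT Jj.val T = ∅ := by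
          by_contra hne
          exact happ (hmemNE.mpr ⟨appT_subset hJsub hT, Finset.nonempty_iff_ne_empty.mpr hne⟩)
        rw [happ', schubertRank_empty_left]
        rw [Finset.sum_eq_zero]
        · simp
        · intro I _
          rw [if_neg]
          intro hc
          have hIne := (hmemNE.mp I.prop).2
          exact (Finset.nonempty_iff_ne_empty.mp hIne) hc.symm
    rw [Finset.sum_congr rfl step2, keySum hJsub hJne hKsub, Matrix.one_apply]
    by_cases h : Jj = Kk
    · subst h
      rw [if_pos rfl, if_pos rfl]
    · rw [if_neg (fun hc => h (Subtype.ext hc)), if_neg h]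
  have hMN : Mmat * Nmat = 1 := mul_eq_one_comm.mp hNM
  -- the candidate coefficients
  refine ⟨fun I => if h : I ∈ NE then ∑ Kk : α, f Kk.val * Nmat Kk ⟨I, h⟩ else 0,
    ⟨fun I hI => dif_neg hI, ?_⟩, ?_⟩
  · -- existence
    intro J hJsub
    by_cases hJ0 : J = ∅
    · subst hJ0
      rw [hf, Finset.sum_eq_zero]
      intro I _
      rw [schubertRank_empty_right]
      ring
    · have hJNE : J ∈ NE := hmemNE.mpr ⟨hJsub, Finset.nonempty_iff_ne_empty.mpr hJ0⟩
      set j : α := ⟨J, hJNE⟩ with hjdef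
      have hconv : ∑ I ∈ NE,
          (if h : I ∈ NE then ∑ Kk : α, f Kk.val * Nmat Kk ⟨I, h⟩ else 0)
            * (schubertRank n I J : ℤ)
          = ∑ I : α, (∑ Kk : α, f Kk.val * Nmat Kk I) * Mmat I j := by
        rw [← Finset.sum_coe_sort NE]
        apply Finset.sum_congr rfl
        intro I _
        rw [dif_pos I.prop]
      rw [hconv]
      symm
      calc ∑ I : α, (∑ Kk : α, f Kk.val * Nmat Kk I) * Mmat I j
          = ∑ I : α, ∑ Kk : α, f Kk.val * Nmat Kk I * Mmat I j := by
            simp only [Finset.sum_mul]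
        _ = ∑ Kk : α, ∑ I : α, f Kk.val * Nmat Kk I * Mmat I j := Finset.sum_comm
        _ = ∑ Kk : α, f Kk.val * ((Nmat * Mmat) Kk j) := by
            apply Finset.sum_congr rfl
            intro Kk _
            rw [Matrix.mul_apply, Finset.mul_sum]
            apply Finset.sum_congr rfl
            intro I _
            ring
        _ = f J := by
            rw [hNM]
            simp only [Matrix.one_apply, mul_ite, mul_one, mul_zero]
            rw [Finset.sum_ite_eq' Finset.univ j (fun Kk => f Kk.val)]
            rw [if_pos (Finset.mem_univ j)]
  · -- uniqueness
    intro c' ⟨hsupp, heqs⟩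
    funext I
    by_cases hI : I ∈ NE
    · rw [dif_pos hI]
      set i : α := ⟨I, hI⟩ with hidef
      have hKval : ∀ Kk : α, f Kk.val = ∑ I' ∈ NE, c' I' * (schubertRank n I' Kk.val : ℤ) :=
        fun Kk => heqs Kk.val (hmemNE.mp Kk.prop).1
      calc c' I = ∑ I' : α, c' I'.val * ((Mmat * Nmat) I' i) := by
            rw [hMN]
            simp only [Matrix.one_apply, mul_ite, mul_one, mul_zero]
            rw [Finset.sum_ite_eq' Finset.univ i (fun I' => c' I'.val)]
            rw [if_pos (Finset.mem_univ i)]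
        _ = ∑ I' : α, ∑ Kk : α, c' I'.val * Mmat I' Kk * Nmat Kk i := by
            apply Finset.sum_congr rfl
            intro I' _
            rw [Matrix.mul_apply, Finset.mul_sum]
            apply Finset.sum_congr rfl
            intro Kk _
            ring
        _ = ∑ Kk : α, ∑ I' : α, c' I'.val * Mmat I' Kk * Nmat Kk i := Finset.sum_comm
        _ = ∑ Kk : α, f Kk.val * Nmat Kk i := by
            apply Finset.sum_congr rfl
            intro Kk _
            rw [hKval Kk, ← Finset.sum_coe_sort NE (fun I' => c' I' * (schubertRank n I' Kk.val : ℤ))]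
            rw [Finset.sum_mul]
    · rw [hsupp I hI, dif_neg hI]
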